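/- For a compact Hausdorff abelian group K, the topology of pointwise convergence on the (discrete) dual group K^∧ coincides with the Bohr topology of the abstract group K^∧, i.e., with the maximal precompact group topology on K^∧: every homomorphism of K^∧ into 𝕋 is continuous with respect to the topology of pointwise convergence on elements of K. -/

import Mathlib

open Pointwise Function

noncomputable section

/-- The canonical evaluation homomorphism of a topological abelian group into its
Pontryagin bidual, `x ↦ (χ ↦ χ x)`. -/
noncomputable def pontryaginEval (G : Type*) [CommGroup G] [TopologicalSpace G]
    [IsTopologicalGroup G] : G →* PontryaginDual (PontryaginDual G) where
  toFun x :=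
    { toFun := fun χ => χ x
      map_one' := rfl
      map_mul' := fun _ _ => rfl
      continuous_toFun :=
        (continuous_eval_const (F := ContinuousMonoidHom G Circle) x :) }
  map_one' := ContinuousMonoidHom.ext fun χ => map_one χ
  map_mul' x y := ContinuousMonoidHom.ext fun χ => map_mul χ x y

/-- A topological group is protodiscrete (linear) if open subgroups form a
neighborhood base at the identity. -/
def Protodiscrete (G : Type*) [Group G] [TopologicalSpace G] : Prop :=
  ∀ U ∈ nhds (1 : G), ∃ V : Subgroup G, IsOpen (V : Set G) ∧ (V : Set G) ⊆ U

/-- A topological group is precompact (totally bounded) if every neighborhood of the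
identity has finitely many translates covering the group. -/
def Precompact (G : Type*) [Group G] [TopologicalSpace G] : Prop :=
  ∀ U ∈ nhds (1 : G), ∃ F : Finset G, ∀ x : G, ∃ f ∈ F, x ∈ f • U

/-- A topological abelian group is (Pontryagin) reflexive if the canonical evaluation
map into its bidual is a topological isomorphism. -/
def PontryaginReflexive (G : Type*) [CommGroup G] [TopologicalSpace G]
    [IsTopologicalGroup G] : Prop :=
  IsHomeomorph (pontryaginEval G)

/-- A subgroup is dually embedded if every continuous character of it extends to a
continuous character of the ambient group. -/
def DuallyEmbedded {G : Type*} [CommGroup G] [TopologicalSpace G] [IsTopologicalGroup G]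
    (L : Subgroup G) : Prop :=
  ∀ χ : PontryaginDual L, ∃ ψ : PontryaginDual G, ∀ x : L, ψ (x : G) = χ x

/-- The annihilator of a subset `K` of `G` in the dual group. -/
def annihilator {G : Type*} [CommGroup G] [TopologicalSpace G] [IsTopologicalGroup G]
    (K : Set G) : Subgroup (PontryaginDual G) where
  carrier := {χ | ∀ x ∈ K, χ x = 1}
  one_mem' := fun x _ => rfl
  mul_mem' := by
    intro a b ha hb x hx
    show a x * b x = 1
    rw [ha x hx, hb x hx, one_mul]
  inv_mem' := by
    intro a ha x hx
    show (a x)⁻¹ = 1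
    rw [ha x hx, inv_one]

/-- A `P`-space: every countable intersection of open sets is open. -/
def IsPSpace (X : Type*) [TopologicalSpace X] : Prop :=
  ∀ s : ℕ → Set X, (∀ n, IsOpen (s n)) → IsOpen (⋂ n, s n)

/-- A set is `Gδ`-dense if it meets every nonempty `Gδ`-set. -/
def GdeltaDense {X : Type*} [TopologicalSpace X] (s : Set X) : Prop :=
  ∀ t : ℕ → Set X, (∀ n, IsOpen (t n)) → (⋂ n, t n).Nonempty → (s ∩ ⋂ n, t n).Nonempty

/-- The graph of a homomorphism, as a subgroup of the product. -/
def graphSubgroup {H₁ H₂ : Type*} [CommGroup H₁] [CommGroup H₂] (φ : H₁ →* H₂) :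
    Subgroup (H₁ × H₂) where
  carrier := {p | p.2 = φ p.1}
  one_mem' := (map_one φ).symm
  mul_mem' := by
    rintro ⟨a, b⟩ ⟨c, d⟩ hb hd
    simp only [Set.mem_setOf_eq] at *
    simp [hb, hd]
  inv_mem' := by
    rintro ⟨a, b⟩ h
    simp only [Set.mem_setOf_eq] at *
    simp [h]

/-- The Σ-product of `D` copies of the circle group inside `𝕋^D`. -/
def sigmaProd (D : Type*) : Subgroup (D → Circle) where
  carrier := {x | {d | x d ≠ 1}.Countable}
  one_mem' := by simp
  mul_mem' := by
    intro a b ha hb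
    refine Set.Countable.mono ?_ (ha.union hb)
    intro d hd
    simp only [Set.mem_union, Set.mem_setOf_eq]
    by_contra h
    push_neg at h
    exact hd (by show a d * b d = 1; rw [h.1, h.2, one_mul])
  inv_mem' := by
    intro a ha
    refine Set.Countable.mono ?_ ha
    intro d hd
    simp only [Set.mem_setOf_eq] at *
    simpa [inv_eq_one] using hd

/-- The group of continuous `Circle`-valued functions on `Y`, as a subgroup of the
product `Y → Circle`; the subspace topology is the topology of pointwise convergence. -/
def Cp (Y : Type*) [TopologicalSpace Y] : Subgroup (Y → Circle) where
  carrier := {f | Continuous f}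
  one_mem' := continuous_const
  mul_mem' := fun hf hg => hf.mul hg
  inv_mem' := fun hf => hf.inv

/-- The one-point Lindelöfication of a discrete set `D`: the point `none` has the
co-countable sets as neighborhoods, all other points are isolated. -/
def Lind (D : Type*) := Option D

instance (D : Type*) : TopologicalSpace (Lind D) where
  IsOpen U := (none : Option D) ∈ U → {d : D | (some d : Option D) ∉ U}.Countable
  isOpen_univ := by intro _; exact Set.countable_empty.mono (fun d hd => hd (Set.mem_univ _))
  isOpen_inter := by
    intro U V hU hV h
    refine Set.Countable.mono ?_ ((hU h.1).union (hV h.2))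
    intro d hd
    simp only [Set.mem_union, Set.mem_setOf_eq] at *
    by_contra hc
    push_neg at hc
    exact hd ⟨hc.1, hc.2⟩
  isOpen_sUnion := by
    intro S hS h
    obtain ⟨U, hUS, hU⟩ := h
    refine Set.Countable.mono ?_ (hS U hUS hU)
    intro d hd
    simp only [Set.mem_setOf_eq] at *
    exact fun hdU => hd ⟨U, hUS, hdU⟩

end

noncomputable section AuxProof

open MeasureTheory ContinuousMap

/-- The monomial character of a finite power of the circle. -/
def monChar {ι : Type*} [Fintype ι] (m : ι → ℤ) : (ι → Circle) →* Circle where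
  toFun x := ∏ i, x i ^ m i
  map_one' := by simp
  map_mul' x y := by
    show ∏ i, (x i * y i) ^ m i = (∏ i, x i ^ m i) * ∏ i, y i ^ m i
    rw [← Finset.prod_mul_distrib]
    exact Finset.prod_congr rfl fun i _ => by rw [mul_zpow]

lemma monChar_apply {ι : Type*} [Fintype ι] (m : ι → ℤ) (x : ι → Circle) :
    monChar m x = ∏ i, x i ^ m i := rfl

lemma monChar_continuous {ι : Type*} [Fintype ι] (m : ι → ℤ) :
    Continuous (monChar m) :=
  continuous_finset_prod _ fun i _ => (continuous_apply i).zpow _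

lemma monChar_add {ι : Type*} [Fintype ι] (m m' : ι → ℤ) (x : ι → Circle) :
    monChar (m + m') x = monChar m x * monChar m' x := by
  simp only [monChar_apply, ← Finset.prod_mul_distrib]
  exact Finset.prod_congr rfl fun i _ => by rw [Pi.add_apply, zpow_add]

lemma monChar_neg {ι : Type*} [Fintype ι] (m : ι → ℤ) (x : ι → Circle) :
    monChar (-m) x = (monChar m x)⁻¹ := by
  simp only [monChar_apply, ← Finset.prod_inv_distrib]
  exact Finset.prod_congr rfl fun i _ => by rw [Pi.neg_apply, zpow_neg]

/-- complex-valued monomial as a continuous map -/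
def monCharC {ι : Type*} [Fintype ι] (m : ι → ℤ) : C(ι → Circle, ℂ) :=
  ⟨fun x => (monChar m x : ℂ), continuous_subtype_val.comp (monChar_continuous m)⟩

lemma monCharC_apply {ι : Type*} [Fintype ι] (m : ι → ℤ) (x : ι → Circle) :
    monCharC m x = (monChar m x : ℂ) := rfl

lemma monCharC_mul {ι : Type*} [Fintype ι] (m m' : ι → ℤ) :
    monCharC m * monCharC m' = monCharC (m + m') := by
  ext x
  show (monChar m x : ℂ) * monChar m' x = (monChar (m + m') x : ℂ)
  rw [monChar_add, Circle.coe_mul]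

lemma monCharC_zero {ι : Type*} [Fintype ι] : monCharC (0 : ι → ℤ) = 1 := by
  ext x
  show (monChar 0 x : ℂ) = 1
  simp [monChar_apply]

lemma monCharC_star {ι : Type*} [Fintype ι] (m : ι → ℤ) :
    star (monCharC m) = monCharC (-m) := by
  ext x
  show starRingEnd ℂ (monChar m x : ℂ) = (monChar (-m) x : ℂ)
  rw [monChar_neg, Circle.coe_inv_eq_conj]

/-- The star subalgebra of trigonometric polynomials on `ι → Circle`. -/
def trigPoly (ι : Type*) [Fintype ι] : StarSubalgebra ℂ C(ι → Circle, ℂ) where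
  carrier := (Submodule.span ℂ (Set.range (monCharC (ι := ι))) : Set C(ι → Circle, ℂ))
  add_mem' ha hb := add_mem ha hb
  zero_mem' := zero_mem _
  mul_mem' := by
    intro a b ha hb
    induction ha using Submodule.span_induction generalizing b with
    | mem g hg =>
      induction hb using Submodule.span_induction with
      | mem g' hg' =>
        obtain ⟨m, rfl⟩ := hg
        obtain ⟨m', rfl⟩ := hg'
        rw [monCharC_mul]
        exact Submodule.subset_span ⟨_, rfl⟩
      | zero => rw [mul_zero]; exact zero_mem _
      | add u v _ _ hu hv => rw [mul_add]; exact add_mem hu hv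
      | smul c u _ hu => rw [mul_smul_comm]; exact Submodule.smul_mem _ _ hu
    | zero => rw [zero_mul]; exact zero_mem _
    | add u v _ _ hu hv => rw [add_mul]; exact add_mem (hu hb) (hv hb)
    | smul c u _ hu => rw [smul_mul_assoc]; exact Submodule.smul_mem _ _ (hu hb)
  one_mem' := by
    have : monCharC (0 : ι → ℤ) ∈ Submodule.span ℂ (Set.range (monCharC (ι := ι))) :=
      Submodule.subset_span ⟨0, rfl⟩
    rwa [monCharC_zero] at this
  algebraMap_mem' := by
    intro c
    have h1 : (1 : C(ι → Circle, ℂ)) ∈ Submodule.span ℂ (Set.range (monCharC (ι := ι))) := by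
      have : monCharC (0 : ι → ℤ) ∈ Submodule.span ℂ (Set.range (monCharC (ι := ι))) :=
        Submodule.subset_span ⟨0, rfl⟩
      rwa [monCharC_zero] at this
    simpa [Algebra.algebraMap_eq_smul_one] using Submodule.smul_mem _ c h1
  star_mem' := by
    intro a ha
    induction ha using Submodule.span_induction with
    | mem g hg =>
      obtain ⟨m, rfl⟩ := hg
      rw [monCharC_star]
      exact Submodule.subset_span ⟨_, rfl⟩
    | zero => rw [star_zero]; exact zero_mem _
    | add u v _ _ hu hv => rw [star_add]; exact add_mem hu hv
    | smul c u _ hu => rw [star_smul]; exact Submodule.smul_mem _ _ hu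

lemma monChar_single {ι : Type*} [Fintype ι] [DecidableEq ι] (i : ι) (z : ι → Circle) :
    monChar (Pi.single i 1) z = z i := by
  rw [monChar_apply, Finset.prod_eq_single i]
  · simp
  · intro j _ hj; simp [Pi.single_eq_of_ne hj]
  · simp

lemma trigPoly_separates (ι : Type*) [Fintype ι] :
    (trigPoly ι).SeparatesPoints := by
  classical
  intro x y hxy
  obtain ⟨i, hi⟩ : ∃ i, x i ≠ y i := by
    by_contra hc; push_neg at hc; exact hxy (funext hc)
  refine ⟨_, ⟨monCharC (Pi.single i 1), Submodule.subset_span ⟨_, rfl⟩, rfl⟩, ?_⟩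
  show (monChar (Pi.single i 1) x : ℂ) ≠ (monChar (Pi.single i 1) y : ℂ)
  rw [monChar_single, monChar_single]
  exact fun hc => hi (Circle.coe_injective hc)

lemma circle_separation {ι : Type*} [Fintype ι]
    (L : Subgroup (ι → Circle)) (hL : IsClosed (L : Set (ι → Circle)))
    (p : ι → Circle) (hp : p ∉ L)
    (h : ∀ m : ι → ℤ, (∀ x ∈ L, monChar m x = 1) → monChar m p = 1) :
    False := by
  classical
  haveI : CompactSpace L := isCompact_iff_compactSpace.mp hL.isCompact
  letI : MeasurableSpace L := borel L
  haveI : BorelSpace L := ⟨rfl⟩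
  set ν : Measure L := Measure.haar with hν
  have hint : ∀ (g : C(ι → Circle, ℂ)) (q : ι → Circle),
      Integrable (fun l : L => g (q * (l : ι → Circle))) ν := by
    intro g q
    have hc : Continuous fun l : L => g (q * (l : ι → Circle)) :=
      g.continuous.comp (continuous_const.mul continuous_subtype_val)
    exact integrableOn_univ.mp (hc.continuousOn.integrableOn_compact isCompact_univ)
  have hint1 : ∀ g : C(ι → Circle, ℂ),
      Integrable (fun l : L => g ((l : ι → Circle))) ν := by
    intro g
    simpa using hint g 1
  set Lam : C(ι → Circle, ℂ) → ℂ :=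
    fun g => (∫ l : L, g (p * (l : ι → Circle)) ∂ν) - ∫ l : L, g ((l : ι → Circle)) ∂ν
    with hLam
  -- Lam vanishes on monomials
  have hmon : ∀ m : ι → ℤ, Lam (monCharC m) = 0 := by
    intro m
    have hfac : ∀ q : ι → Circle, (fun l : L => monCharC m (q * (l : ι → Circle)))
        = fun l : L => (monChar m q : ℂ) * (monChar m ((l : ι → Circle)) : ℂ) := by
      intro q
      funext l
      rw [monCharC_apply, map_mul, Circle.coe_mul]
    have hLm : Lam (monCharC m)
        = ((monChar m p : ℂ) - 1) * ∫ l : L, (monChar m ((l : ι → Circle)) : ℂ) ∂ν := by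
      rw [hLam]
      simp only
      rw [hfac p, integral_const_mul]
      have : (fun l : L => monCharC m ((l : ι → Circle)))
          = fun l : L => (monChar m ((l : ι → Circle)) : ℂ) := rfl
      rw [this]
      try ring
    by_cases hm : ∀ x ∈ L, monChar m x = 1
    · rw [hLm, h m hm]
      simp
    · push_neg at hm
      obtain ⟨x₀, hx₀L, hx₀⟩ := hm
      have hψ : (∫ l : L, (monChar m ((l : ι → Circle)) : ℂ) ∂ν) = 0 := by
        have hinv := integral_mul_left_eq_self (μ := ν)
          (fun l : L => (monChar m ((l : ι → Circle)) : ℂ)) ⟨x₀, hx₀L⟩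
        have heq : (fun l : L =>
            (monChar m (((⟨x₀, hx₀L⟩ : L) * l : L) : ι → Circle) : ℂ))
            = fun l : L => (monChar m x₀ : ℂ) * (monChar m ((l : ι → Circle)) : ℂ) := by
          funext l
          show (monChar m (x₀ * (l : ι → Circle)) : ℂ) = _
          rw [map_mul, Circle.coe_mul]
        rw [heq, integral_const_mul] at hinv
        by_contra hne
        have h1 : (monChar m x₀ : ℂ) = 1 := by
          have := mul_right_cancel₀ hne (hinv.trans (one_mul _).symm)
          exact this
        exact hx₀ (Circle.coe_injective (by simpa using h1))
      rw [hLm, hψ, mul_zero]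
  -- Lam vanishes on the trig polynomials
  have hspan : ∀ g ∈ trigPoly ι, Lam g = 0 := by
    intro g hg
    induction hg using Submodule.span_induction with
    | mem g hg => obtain ⟨m, rfl⟩ := hg; exact hmon m
    | zero => simp [hLam]
    | add u v _ _ hu hv =>
      have : Lam (u + v) = Lam u + Lam v := by
        simp only [hLam, ContinuousMap.add_apply]
        rw [integral_add (hint u p) (hint v p), integral_add (hint1 u) (hint1 v)]
        ring
      rw [this, hu, hv, add_zero]
    | smul c u _ hu =>
      have : Lam (c • u) = c * Lam u := by
        simp only [hLam, ContinuousMap.smul_apply, smul_eq_mul]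
        rw [integral_const_mul, integral_const_mul]
        ring
      rw [this, hu, mul_zero]
  -- Urysohn function separating L from p • L
  have hLc : IsClosed ((fun x => p * x) '' (L : Set (ι → Circle))) :=
    (hL.isCompact.image (continuous_const.mul continuous_id)).isClosed
  have hdisj : Disjoint ((fun x => p * x) '' (L : Set (ι → Circle))) (L : Set (ι → Circle)) := by
    rw [Set.disjoint_left]
    rintro z ⟨l, hl, rfl⟩ hz
    exact hp (by simpa using mul_mem hz (inv_mem hl))
  obtain ⟨f, hf0, hf1, hf01⟩ := exists_continuous_zero_one_of_isClosed hLc hL hdisj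
  set fC : C(ι → Circle, ℂ) := (⟨Complex.ofReal, Complex.continuous_ofReal⟩ : C(ℝ, ℂ)).comp f
    with hfC
  -- value of Lam on fC
  have hLf : Lam fC = - ((ν Set.univ).toReal : ℂ) := by
    have h1 : (fun l : L => fC (p * (l : ι → Circle))) = fun _ : L => (0 : ℂ) := by
      funext l
      have : f (p * (l : ι → Circle)) = 0 := hf0 ⟨(l : ι → Circle), l.2, rfl⟩
      simp [hfC, this]
    have h2 : (fun l : L => fC ((l : ι → Circle))) = fun _ : L => (1 : ℂ) := by
      funext l
      have : f ((l : ι → Circle)) = 1 := hf1 l.2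
      simp [hfC, this]
    rw [hLam]
    simp only
    rw [h1, h2, integral_const, integral_const]
    simp
    rfl
  -- the measure is positive and finite
  have hν0 : (ν Set.univ).toReal > 0 := by
    refine ENNReal.toReal_pos ?_ ?_
    · exact (isOpen_univ.measure_ne_zero ν ⟨1, trivial⟩)
    · exact isCompact_univ.measure_lt_top.ne
  -- approximate fC by a trig polynomial
  have hdense := ContinuousMap.starSubalgebra_topologicalClosure_eq_top_of_separatesPoints
    (trigPoly ι) (trigPoly_separates ι)
  have hmem : fC ∈ (trigPoly ι).topologicalClosure := by rw [hdense]; trivial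
  have : fC ∈ closure ((trigPoly ι) : Set C(ι → Circle, ℂ)) := hmem
  rw [Metric.mem_closure_iff] at this
  obtain ⟨g, hgA, hgd⟩ := this ((1 : ℝ)/3) (by norm_num)
  haveI : IsFiniteMeasure ν := ⟨isCompact_univ.measure_lt_top⟩
  have hsub : Lam (fC - g) = Lam fC - Lam g := by
    simp only [hLam, ContinuousMap.sub_apply]
    rw [integral_sub (hint fC p) (hint g p), integral_sub (hint1 fC) (hint1 g)]
    ring
  have hfg : ∀ x, ‖(fC - g) x‖ ≤ 1/3 := by
    intro x
    calc ‖(fC - g) x‖ ≤ ‖fC - g‖ := ContinuousMap.norm_coe_le_norm _ _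
      _ ≤ 1/3 := by rw [← dist_eq_norm]; exact hgd.le
  have hb : ∀ q : ι → Circle,
      ‖∫ l : L, (fC - g) (q * (l : ι → Circle)) ∂ν‖ ≤ (1/3) * (ν Set.univ).toReal :=
    fun q => norm_integral_le_of_norm_le_const
      (Filter.Eventually.of_forall fun l => hfg _)
  have hbound : ‖Lam (fC - g)‖ ≤ 2 * ((1/3) * (ν Set.univ).toReal) := by
    have h2 : Lam (fC - g) = (∫ l : L, (fC - g) (p * (l : ι → Circle)) ∂ν)
        - ∫ l : L, (fC - g) ((l : ι → Circle)) ∂ν := rfl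
    rw [h2]
    calc ‖(∫ l : L, (fC - g) (p * (l : ι → Circle)) ∂ν)
        - ∫ l : L, (fC - g) ((l : ι → Circle)) ∂ν‖
        ≤ ‖∫ l : L, (fC - g) (p * (l : ι → Circle)) ∂ν‖
          + ‖∫ l : L, (fC - g) ((l : ι → Circle)) ∂ν‖ := norm_sub_le _ _
      _ ≤ (1/3) * (ν Set.univ).toReal + (1/3) * (ν Set.univ).toReal := by
          have h3 := hb p
          have h4 := hb 1
          simp only [one_mul] at h4
          exact add_le_add h3 h4
      _ = 2 * ((1/3) * (ν Set.univ).toReal) := by ring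
  have hLg : Lam g = 0 := hspan g hgA
  rw [hsub, hLg, sub_zero, hLf] at hbound
  rw [norm_neg] at hbound
  have : ‖((ν Set.univ).toReal : ℂ)‖ = (ν Set.univ).toReal := by
    rw [Complex.norm_real, Real.norm_eq_abs, abs_of_nonneg hν0.le]
  rw [this] at hbound
  linarith

/-- evaluation homomorphism -/
def evalHom {K : Type*} [CommGroup K] [TopologicalSpace K] [IsTopologicalGroup K] (k : K) :
    PontryaginDual K →* Circle where
  toFun χ := χ k
  map_one' := rfl
  map_mul' _ _ := rfl

lemma exists_eval {K : Type*} [CommGroup K] [TopologicalSpace K] [IsTopologicalGroup K]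
    [CompactSpace K] [T2Space K] (f : PontryaginDual K →* Circle) :
    ∃ k : K, ∀ χ : PontryaginDual K, χ k = f χ := by
  classical
  have hfin : ∀ u : Finset (PontryaginDual K), ∃ k : K, ∀ χ ∈ u, χ k = f χ := by
    intro u
    set Φ : K →* (↥u → Circle) :=
      { toFun := fun k χ => (χ : PontryaginDual K) k
        map_one' := funext fun χ => map_one (χ : PontryaginDual K)
        map_mul' := fun a b => funext fun χ => map_mul (χ : PontryaginDual K) a b } with hΦ
    have hΦc : Continuous Φ := continuous_pi fun χ => map_continuous (χ : PontryaginDual K)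
    set L : Subgroup (↥u → Circle) := Φ.range with hLdef
    have hLclosed : IsClosed (L : Set (↥u → Circle)) := by
      rw [hLdef, MonoidHom.coe_range]
      exact (isCompact_range hΦc).isClosed
    set p : ↥u → Circle := fun χ => f (χ : PontryaginDual K) with hpdef
    by_cases hp : p ∈ L
    · obtain ⟨k, hk⟩ := hp
      exact ⟨k, fun χ hχ => congrFun hk ⟨χ, hχ⟩⟩
    · exfalso
      refine circle_separation L hLclosed p hp ?_
      intro m hm
      set g : PontryaginDual K := ∏ χ : ↥u, (χ : PontryaginDual K) ^ (m χ) with hgdef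
      have hgk : ∀ k : K, g k = monChar m (Φ k) := by
        intro k
        show evalHom k g = _
        rw [hgdef, map_prod, monChar_apply]
        exact Finset.prod_congr rfl fun χ _ => map_zpow (evalHom k) _ _
      have hg1 : g = 1 := by
        apply ContinuousMonoidHom.ext
        intro k
        exact (hgk k).trans (hm (Φ k) ⟨k, rfl⟩)
      have hfg := congrArg f hg1
      rw [map_one, hgdef, map_prod] at hfg
      rw [monChar_apply]
      calc ∏ χ : ↥u, p χ ^ m χ
          = ∏ χ : ↥u, f ((χ : PontryaginDual K) ^ m χ) :=
            Finset.prod_congr rfl fun χ _ => (map_zpow f _ _).symm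
        _ = 1 := hfg
  set C : PontryaginDual K → Set K := fun χ => {k | χ k = f χ} with hCdef
  have hCc : ∀ χ, IsClosed (C χ) := fun χ => isClosed_eq (map_continuous χ) continuous_const
  have hne : (Set.univ ∩ ⋂ χ, C χ).Nonempty := by
    by_contra hc
    rw [Set.not_nonempty_iff_eq_empty] at hc
    obtain ⟨u, hu⟩ := IsCompact.elim_finite_subfamily_closed isCompact_univ C hCc hc
    obtain ⟨k, hk⟩ := hfin u
    have : k ∈ Set.univ ∩ ⋂ χ ∈ u, C χ :=
      ⟨trivial, Set.mem_iInter₂.mpr fun χ hχ => hk χ hχ⟩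
    rw [hu] at this
    exact this
  obtain ⟨k, hk⟩ := hne
  exact ⟨k, fun χ => Set.mem_iInter.mp hk.2 χ⟩

end AuxProof

/-- for a compact Hausdorff abelian group `K`, the topology of pointwise
convergence on the dual `K^∧` coincides with the Bohr topology (the initial topology
from all homomorphisms `K^∧ → 𝕋`); in particular every homomorphism `K^∧ → 𝕋` is
continuous for the pointwise topology. -/
theorem statement15 (K : Type*) [CommGroup K] [TopologicalSpace K] [IsTopologicalGroup K]
    [CompactSpace K] [T2Space K] :
    (TopologicalSpace.induced (fun χ : PontryaginDual K => (χ : K → Circle))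
        Pi.topologicalSpace
      = TopologicalSpace.induced
          (fun (χ : PontryaginDual K) => fun (f : PontryaginDual K →* Circle) => f χ)
          Pi.topologicalSpace) ∧
    (∀ f : PontryaginDual K →* Circle,
      @Continuous (PontryaginDual K) Circle
        (TopologicalSpace.induced (fun χ : PontryaginDual K => (χ : K → Circle))
          Pi.topologicalSpace) inferInstance f) := by
  set tp := TopologicalSpace.induced (fun χ : PontryaginDual K => (χ : K → Circle))
    Pi.topologicalSpace with htp
  have h2 : ∀ f : PontryaginDual K →* Circle,
      @Continuous (PontryaginDual K) Circle tp inferInstance f := by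
    intro f
    obtain ⟨k, hk⟩ := exists_eval f
    have hfe : ⇑f = (fun v : K → Circle => v k) ∘
        (fun χ : PontryaginDual K => (χ : K → Circle)) := funext fun χ => (hk χ).symm
    rw [hfe]
    exact Continuous.comp (continuous_apply k) continuous_induced_dom
  have hpi : ∀ (α : Type _) (g : α → K → Circle),
      TopologicalSpace.induced g Pi.topologicalSpace
        = ⨅ k : K, TopologicalSpace.induced (fun a => g a k) inferInstance := by
    intro α g
    rw [show (Pi.topologicalSpace : TopologicalSpace (K → Circle))
        = ⨅ k : K, TopologicalSpace.induced (fun f : K → Circle => f k) inferInstance from rfl,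
      induced_iInf]
    simp only [induced_compose]
    rfl
  refine ⟨le_antisymm ?_ ?_, h2⟩
  · -- tp ≤ tb
    have hΨ : @Continuous (PontryaginDual K) ((PontryaginDual K →* Circle) → Circle) tp _
        (fun χ => fun f : PontryaginDual K →* Circle => f χ) :=
      continuous_pi fun f => h2 f
    exact continuous_iff_le_induced.mp hΨ
  · -- tb ≤ tp
    rw [htp, hpi (PontryaginDual K) (fun χ => (χ : K → Circle))]
    refine le_iInf fun k => ?_
    have heq : (fun χ : PontryaginDual K => χ k)
        = (fun w : (PontryaginDual K →* Circle) → Circle => w (evalHom k))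
          ∘ (fun χ => fun f : PontryaginDual K →* Circle => f χ) := rfl
    rw [heq, ← induced_compose]
    refine le_trans (induced_mono ?_) le_rfl
    exact continuous_iff_le_induced.mp (continuous_apply (evalHom k))
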